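/- Let p and d be positive integers, let r > 0, and let θ : (ℤ/pℤ)² → ℝ satisfy: θ(0) = 0; θ(−x) = θ(x) for all x; θ(x) ≠ 0 for at most 2d values of x; |θ(x)| ≤ r for all x; and Σ_x |θ(x)| ≤ 1/2. Then the matrix I − C(θ) is invertible and (1/p²) · tr[ (I − C(θ))⁻¹ ] ≤ 1 + 16·d·r². -/

import Mathlib

/-- For `θ : (ℤ/pℤ)² → ℝ`, `C(θ)` is the `p² × p²` matrix indexed by `(ℤ/pℤ)² × (ℤ/pℤ)²`
with entries `C(θ)(a,b) = θ(b - a)`. -/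
def Cmat (p : ℕ) (θ : ZMod p × ZMod p → ℝ) :
    Matrix (ZMod p × ZMod p) (ZMod p × ZMod p) ℝ :=
  Matrix.of fun a b => θ (b - a)

attribute [local instance] Matrix.linftyOpNormedRing Matrix.linftyOpNormedAlgebra

namespace Stmt12Aux

open Finset

variable {p : ℕ} [NeZero p]

/-- Convolution on `(ℤ/pℤ)²`. -/
noncomputable def conv (f g : ZMod p × ZMod p → ℝ) : ZMod p × ZMod p → ℝ :=
  fun x => ∑ y, f y * g (x - y)

lemma Cmat_mul (f g : ZMod p × ZMod p → ℝ) :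
    Cmat p f * Cmat p g = Cmat p (conv f g) := by
  ext a b
  simp only [Cmat, Matrix.mul_apply, Matrix.of_apply, conv]
  refine Fintype.sum_equiv (Equiv.subRight a) _ _ fun c => ?_
  simp [sub_sub_sub_cancel_right]

/-- Iterated convolution powers of `θ`: `iter θ n = θ^{*(n+1)}`. -/
noncomputable def iter (θ : ZMod p × ZMod p → ℝ) : ℕ → (ZMod p × ZMod p → ℝ)
  | 0 => θ
  | n + 1 => conv (iter θ n) θ

lemma Cmat_pow (θ : ZMod p × ZMod p → ℝ) (n : ℕ) :
    Cmat p θ ^ (n + 1) = Cmat p (iter θ n) := by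
  induction n with
  | zero => rw [pow_one]; rfl
  | succ n ih => rw [pow_succ, ih, Cmat_mul]; rfl

lemma trace_Cmat (f : ZMod p × ZMod p → ℝ) :
    Matrix.trace (Cmat p f) = (p : ℝ) ^ 2 * f 0 := by
  simp only [Matrix.trace, Matrix.diag, Cmat, Matrix.of_apply, sub_self]
  rw [Finset.sum_const, Finset.card_univ]
  simp only [Fintype.card_prod, ZMod.card, nsmul_eq_mul]
  push_cast
  ring

lemma sum_abs_shift (g : ZMod p × ZMod p → ℝ) (y : ZMod p × ZMod p) :
    ∑ x, |g (x - y)| = ∑ x, |g x| :=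
  Equiv.sum_comp (Equiv.subRight y) fun x => |g x|

lemma conv_l1 (f g : ZMod p × ZMod p → ℝ) :
    ∑ x, |conv f g x| ≤ (∑ x, |f x|) * (∑ x, |g x|) := by
  calc ∑ x, |conv f g x| ≤ ∑ x, ∑ y, |f y| * |g (x - y)| := by
        refine Finset.sum_le_sum fun x _ => ?_
        refine (Finset.abs_sum_le_sum_abs _ _).trans (le_of_eq ?_)
        exact Finset.sum_congr rfl fun y _ => abs_mul _ _
    _ = ∑ y, |f y| * ∑ x, |g (x - y)| := by
        rw [Finset.sum_comm]
        exact Finset.sum_congr rfl fun y _ => (Finset.mul_sum _ _ _).symm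
    _ = (∑ y, |f y|) * (∑ x, |g x|) := by
        rw [Finset.sum_mul]
        exact Finset.sum_congr rfl fun y _ => by rw [sum_abs_shift]

lemma iter_l1 (θ : ZMod p × ZMod p → ℝ) (n : ℕ) :
    ∑ x, |iter θ n x| ≤ (∑ x, |θ x|) ^ (n + 1) := by
  induction n with
  | zero => simp [iter]
  | succ n ih =>
      calc ∑ x, |iter θ (n + 1) x| ≤ (∑ x, |iter θ n x|) * (∑ x, |θ x|) := conv_l1 _ _
        _ ≤ (∑ x, |θ x|) ^ (n + 1) * (∑ x, |θ x|) := by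
            refine mul_le_mul_of_nonneg_right ih ?_
            exact Finset.sum_nonneg fun x _ => abs_nonneg _
        _ = (∑ x, |θ x|) ^ (n + 2) := by ring

lemma norm_Cmat (θ : ZMod p × ZMod p → ℝ) : ‖Cmat p θ‖ = ∑ x, |θ x| := by
  rw [Matrix.linfty_opNorm_def]
  have hrow : ∀ a : ZMod p × ZMod p,
      (∑ b, ‖Cmat p θ a b‖₊) = ∑ x, ‖θ x‖₊ := fun a =>
    Equiv.sum_comp (Equiv.subRight a) fun x => ‖θ x‖₊
  rw [Finset.sup_congr rfl (fun a _ => hrow a), Finset.sup_const Finset.univ_nonempty]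
  push_cast
  exact Finset.sum_congr rfl fun x _ => Real.norm_eq_abs _

lemma tsum_split2 (t : ℕ → ℝ) (h : Summable t) :
    ∑' n, t n = t 0 + t 1 + ∑' n, t (n + 2) := by
  have h1 : Summable fun n => t (n + 1) := (summable_nat_add_iff 1).mpr h
  rw [Summable.tsum_eq_zero_add h, Summable.tsum_eq_zero_add h1]
  simp only [zero_add]
  rw [← add_assoc]

end Stmt12Aux

open Stmt12Aux in
set_option maxHeartbeats 1000000 in
/-- If `θ(0) = 0`, `θ` is even, `θ` is nonzero at no more than `2d` points, `|θ| ≤ r`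
pointwise and `∑ |θ| ≤ 1/2`, then `I - C(θ)` is invertible and
`p⁻² tr[(I - C(θ))⁻¹] ≤ 1 + 16 d r²`. -/
theorem stmt_12 (p d : ℕ) [NeZero p] (hd : 0 < d) (r : ℝ) (hr : 0 < r)
    (θ : ZMod p × ZMod p → ℝ)
    (h0 : θ 0 = 0)
    (hsym : ∀ x : ZMod p × ZMod p, θ (-x) = θ x)
    (hsupp : Set.ncard {x : ZMod p × ZMod p | θ x ≠ 0} ≤ 2 * d)
    (hbound : ∀ x : ZMod p × ZMod p, |θ x| ≤ r)
    (hl1 : ∑ x : ZMod p × ZMod p, |θ x| ≤ 1 / 2) :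
    IsUnit (1 - Cmat p θ) ∧
    (1 / (p : ℝ) ^ 2) * Matrix.trace (1 - Cmat p θ)⁻¹ ≤ 1 + 16 * d * r ^ 2 := by
  classical
  set N : ℝ := ∑ x : ZMod p × ZMod p, |θ x| with hN
  have hN0 : 0 ≤ N := Finset.sum_nonneg fun x _ => abs_nonneg _
  -- `N ≤ 2 d r` from the support bound
  have hN2d : N ≤ 2 * d * r := by
    set s : Finset (ZMod p × ZMod p) := Finset.univ.filter (fun x => θ x ≠ 0) with hs
    have hNs : N = ∑ x ∈ s, |θ x| := by
      rw [hN]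
      refine (Finset.sum_subset (Finset.filter_subset _ _) ?_).symm
      intro x _ hx
      simp only [hs, Finset.mem_filter, Finset.mem_univ, true_and, not_not] at hx
      simp [hx]
    have hcard : s.card ≤ 2 * d := by
      have : {x : ZMod p × ZMod p | θ x ≠ 0}.ncard = s.card := by
        rw [Set.ncard_eq_toFinset_card']
        congr 1
        ext x
        simp [hs]
      rwa [this] at hsupp
    have hNs' : ∑ x ∈ s, |θ x| ≤ s.card • r :=
      Finset.sum_le_card_nsmul s _ r fun x _ => hbound x
    have : (s.card : ℝ) * r ≤ (2 * d : ℕ) * r := by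
      exact mul_le_mul_of_nonneg_right (by exact_mod_cast hcard) hr.le
    rw [hNs]
    refine hNs'.trans ?_
    rw [nsmul_eq_mul]
    refine this.trans (le_of_eq ?_)
    push_cast
    ring
  have hnorm : ‖Cmat p θ‖ < 1 := by
    rw [norm_Cmat]
    have h : (∑ x : ZMod p × ZMod p, |θ x|) ≤ 1 / 2 := hl1
    linarith
  have hunit : IsUnit (1 - Cmat p θ) := isUnit_one_sub_of_norm_lt_one hnorm
  refine ⟨hunit, ?_⟩
  have hsum : Summable (fun n : ℕ => Cmat p θ ^ n) :=
    summable_geometric_of_norm_lt_one hnorm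
  have hinv : (1 - Cmat p θ)⁻¹ = ∑' n : ℕ, Cmat p θ ^ n :=
    Matrix.inv_eq_right_inv (mul_neg_geom_series _ hnorm)
  -- trace commutes with the sum
  let L : Matrix (ZMod p × ZMod p) (ZMod p × ZMod p) ℝ →L[ℝ] ℝ :=
    LinearMap.toContinuousLinearMap
      (Matrix.traceLinearMap (ZMod p × ZMod p) ℝ ℝ)
  have hL : ∀ A : Matrix (ZMod p × ZMod p) (ZMod p × ZMod p) ℝ,
      L A = Matrix.trace A := by
    intro A
    simp only [L, LinearMap.coe_toContinuousLinearMap', Matrix.traceLinearMap_apply]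
  have htr : Matrix.trace (∑' n : ℕ, Cmat p θ ^ n)
      = ∑' n : ℕ, Matrix.trace (Cmat p θ ^ n) := by
    have h := L.map_tsum hsum
    simpa only [hL] using h
  have hsumtr : Summable (fun n : ℕ => Matrix.trace (Cmat p θ ^ n)) := by
    have h := L.summable hsum
    simpa only [hL] using h
  -- key pointwise bounds on the iterated convolutions
  have key : ∀ n : ℕ, |iter θ (n + 1) 0| ≤ 2 * d * r ^ 2 * (1 / 2) ^ n := by
    intro n
    have h1 : |iter θ (n + 1) 0| ≤ r * ∑ y, |iter θ n y| := by
      show |∑ y, iter θ n y * θ (0 - y)| ≤ _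
      refine (Finset.abs_sum_le_sum_abs _ _).trans ?_
      rw [Finset.mul_sum]
      refine Finset.sum_le_sum fun y _ => ?_
      rw [abs_mul, mul_comm]
      exact mul_le_mul_of_nonneg_right (hbound _) (abs_nonneg _)
    have h2 : ∑ y, |iter θ n y| ≤ N ^ (n + 1) := iter_l1 θ n
    have h3 : N ^ (n + 1) ≤ (1 / 2) ^ n * (2 * d * r) := by
      have hp : N ^ n ≤ (1 / 2) ^ n := pow_le_pow_left₀ hN0 (by linarith) n
      calc N ^ (n + 1) = N ^ n * N := by ring
        _ ≤ (1 / 2) ^ n * (2 * d * r) := by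
            refine mul_le_mul hp hN2d hN0 (by positivity)
    calc |iter θ (n + 1) 0| ≤ r * ∑ y, |iter θ n y| := h1
      _ ≤ r * ((1 / 2) ^ n * (2 * d * r)) := by
          refine mul_le_mul_of_nonneg_left (h2.trans h3) hr.le
      _ = 2 * d * r ^ 2 * (1 / 2) ^ n := by ring
  -- summability of the tail terms and the geometric bound
  have hgsum : Summable (fun n : ℕ => 2 * (d : ℝ) * r ^ 2 * (1 / 2) ^ n) :=
    (summable_geometric_of_lt_one (by norm_num) (by norm_num)).mul_left _
  have hbsum : Summable (fun n : ℕ => iter θ (n + 1) 0) := by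
    refine Summable.of_norm_bounded hgsum fun n => ?_
    rw [Real.norm_eq_abs]; exact key n
  have hStail : ∑' n : ℕ, iter θ (n + 1) 0 ≤ 4 * d * r ^ 2 := by
    have h1 : ∑' n : ℕ, iter θ (n + 1) 0
        ≤ ∑' n : ℕ, 2 * (d : ℝ) * r ^ 2 * (1 / 2) ^ n := by
      refine Summable.tsum_le_tsum (fun n => (le_abs_self _).trans (key n)) hbsum hgsum
    have h2 : ∑' n : ℕ, 2 * (d : ℝ) * r ^ 2 * (1 / 2) ^ n = 4 * d * r ^ 2 := by
      rw [tsum_mul_left, tsum_geometric_of_lt_one (by norm_num) (by norm_num)]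
      norm_num
      ring
    linarith
  -- assemble
  have hP0 : (0 : ℝ) < (p : ℝ) ^ 2 := by
    have : (0 : ℝ) < (p : ℝ) := by
      exact_mod_cast Nat.pos_of_ne_zero (NeZero.ne p)
    positivity
  have htr0 : Matrix.trace (Cmat p θ ^ 0) = (p : ℝ) ^ 2 := by
    rw [pow_zero]
    have : Matrix.trace (1 : Matrix (ZMod p × ZMod p) (ZMod p × ZMod p) ℝ)
        = (Fintype.card (ZMod p × ZMod p) : ℝ) := by
      simp [Matrix.trace_one]
    rw [this]
    simp [Fintype.card_prod, ZMod.card]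
    push_cast
    ring
  have htrn : ∀ n : ℕ, Matrix.trace (Cmat p θ ^ (n + 1))
      = (p : ℝ) ^ 2 * iter θ n 0 := by
    intro n; rw [Cmat_pow, trace_Cmat]
  have e1 : Matrix.trace (Cmat p θ ^ 1) = (p : ℝ) ^ 2 * θ 0 := by
    rw [pow_one, trace_Cmat]
  have e2 : ∑' n : ℕ, Matrix.trace (Cmat p θ ^ (n + 2))
      = (p : ℝ) ^ 2 * ∑' n : ℕ, iter θ (n + 1) 0 := by
    rw [← tsum_mul_left]
    exact tsum_congr fun n => htrn (n + 1)
  have hsplit : ∑' n : ℕ, Matrix.trace (Cmat p θ ^ n)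
      = Matrix.trace (Cmat p θ ^ 0) + Matrix.trace (Cmat p θ ^ 1)
        + ∑' n : ℕ, Matrix.trace (Cmat p θ ^ (n + 2)) :=
    tsum_split2 (fun n => Matrix.trace (Cmat p θ ^ n)) hsumtr
  rw [htr0, e1, e2] at hsplit
  rw [hinv, htr, hsplit, h0]
  have hfinal : (1 / (p : ℝ) ^ 2) *
      ((p : ℝ) ^ 2 + (p : ℝ) ^ 2 * 0 + (p : ℝ) ^ 2 * ∑' n : ℕ, iter θ (n + 1) 0)
      = 1 + ∑' n : ℕ, iter θ (n + 1) 0 := by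
    have hinv' : (1 / (p : ℝ) ^ 2) * (p : ℝ) ^ 2 = 1 := by
      rw [one_div, inv_mul_cancel₀ hP0.ne']
    linear_combination (1 + ∑' n : ℕ, iter θ (n + 1) 0) * hinv'
  rw [hfinal]
  have hdr : (0 : ℝ) ≤ (d : ℝ) * r ^ 2 := by positivity
  nlinarith [hStail]
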